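/- Let λ ∈ ℂ with λ ≠ 0 and λ ≠ 1, and define D₁(z) = z + λ/z, D₂(z) = z + (1 − λ)/(z − 1), D₃(z) = z + (λ² − λ)/(z − λ). Then for every pair of distinct indices i, j ∈ {1, 2, 3}, there do not exist a, b, c, d ∈ ℂ with a·d − b·c ≠ 0 such that for all z ∈ ℂ with z ≠ 0, z ≠ 1 and z ≠ λ one has (c·D_i(z) + d)·D_j(z) = a·D_i(z) + b. In other words, no D_j is obtained from D_i (i ≠ j) by postcomposition with a Möbius transformation, so the three decompositions L_λ = C_i ∘ D_i of the Lattès map L_λ are pairwise non-equivalent. -/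

import Mathlib

open Polynomial in
lemma quartic_zero (lam k0 k1 k2 k3 k4 : ℂ)
    (h : ∀ z : ℂ, z ≠ 0 → z ≠ 1 → z ≠ lam →
      k4*z^4 + k3*z^3 + k2*z^2 + k1*z + k0 = 0) :
    k0 = 0 ∧ k1 = 0 ∧ k2 = 0 ∧ k3 = 0 ∧ k4 = 0 := by
  have hp : (C k4 * X^4 + C k3 * X^3 + C k2 * X^2 + C k1 * X + C k0 : ℂ[X]) = 0 := by
    apply Polynomial.eq_zero_of_infinite_isRoot
    apply Set.Infinite.mono (s := ({0, 1, lam} : Set ℂ)ᶜ)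
    · intro z hz
      simp only [Set.mem_compl_iff, Set.mem_insert_iff, Set.mem_singleton_iff, not_or] at hz
      obtain ⟨hz0, hz1, hzl⟩ := hz
      simp only [Set.mem_setOf_eq, IsRoot.def, eval_add, eval_mul, eval_pow, eval_C, eval_X]
      have := h z hz0 hz1 hzl
      linear_combination this
    · exact Set.Finite.infinite_compl (Set.toFinite _)
  have h4 := congrArg (fun q : ℂ[X] => q.coeff 4) hp
  have h3 := congrArg (fun q : ℂ[X] => q.coeff 3) hp
  have h2 := congrArg (fun q : ℂ[X] => q.coeff 2) hp
  have hh1 := congrArg (fun q : ℂ[X] => q.coeff 1) hp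
  have hh0 := congrArg (fun q : ℂ[X] => q.coeff 0) hp
  simp [coeff_add, coeff_C_mul, coeff_X_pow, coeff_C] at h4 h3 h2 hh1 hh0
  exact ⟨hh0, hh1, h2, h3, h4⟩


lemma pair01 (lam a b c d : ℂ) (h0 : lam ≠ 0) (h1 : lam ≠ 1) (hdet : a * d - b * c ≠ 0)
    (h : ∀ z : ℂ, z ≠ 0 → z ≠ 1 → z ≠ lam →
      (c * (z + lam / z) + d) * (z + (1 - lam) / (z - 1)) = a * (z + lam / z) + b) :
    False := by
  obtain ⟨e0, e1, e2, e3, e4⟩ := quartic_zero lam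
      (c*lam - c*lam^2 + a*lam) (d - d*lam - c*lam + b - a*lam)
      (-d + c - b + a) (d - c - a) c (by
    intro z hz0 hz1 hzl
    have hz1' : z - 1 ≠ 0 := sub_ne_zero.mpr hz1
    have hh := h z hz0 hz1 hzl
    field_simp at hh
    refine mul_left_cancel₀ hz0 ?_
    rw [mul_zero]
    linear_combination z * hh)
  have hc : c = 0 := e4
  have ha : a = 0 := by
    have hx : a * lam = 0 := by linear_combination e0 + (lam^2 - lam) * hc
    rcases mul_eq_zero.mp hx with h' | h'
    · exact h'
    · exact absurd h' h0
  have hd : d = 0 := by linear_combination e3 + hc + ha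
  have hb : b = 0 := by linear_combination -e2 - hd + hc + ha
  exact hdet (by rw [ha, hb, hc, hd]; ring)

lemma pair02 (lam a b c d : ℂ) (h0 : lam ≠ 0) (h1 : lam ≠ 1) (hdet : a * d - b * c ≠ 0)
    (h : ∀ z : ℂ, z ≠ 0 → z ≠ 1 → z ≠ lam →
      (c * (z + lam / z) + d) * (z + (lam ^ 2 - lam) / (z - lam)) = a * (z + lam / z) + b) :
    False := by
  obtain ⟨e0, e1, e2, e3, e4⟩ := quartic_zero lam
      (-c*lam^2 + c*lam^3 + a*lam^2) (-d*lam + d*lam^2 - c*lam^2 + b*lam - a*lam)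
      (-d*lam + c*lam^2 - b + a*lam) (d - c*lam - a) c (by
    intro z hz0 hz1 hzl
    have hzl' : z - lam ≠ 0 := sub_ne_zero.mpr hzl
    have hh := h z hz0 hz1 hzl
    field_simp at hh
    refine mul_left_cancel₀ hz0 ?_
    rw [mul_zero]
    linear_combination z * hh)
  have hc : c = 0 := e4
  have ha : a = 0 := by
    have hx : a * (lam * lam) = 0 := by linear_combination e0 + (lam^2 - lam^3) * hc
    rcases mul_eq_zero.mp hx with h' | h'
    · exact h'
    · exact absurd h' (mul_ne_zero h0 h0)
  have hd : d = 0 := by linear_combination e3 + lam * hc + ha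
  have hb : b = 0 := by linear_combination -e2 - lam * hd + lam^2 * hc + lam * ha
  exact hdet (by rw [ha, hb, hc, hd]; ring)

lemma pair12 (lam a b c d : ℂ) (h0 : lam ≠ 0) (h1 : lam ≠ 1) (hdet : a * d - b * c ≠ 0)
    (h : ∀ z : ℂ, z ≠ 0 → z ≠ 1 → z ≠ lam →
      (c * (z + (1 - lam) / (z - 1)) + d) * (z + (lam ^ 2 - lam) / (z - lam))
        = a * (z + (1 - lam) / (z - 1)) + b) :
    False := by
  obtain ⟨e0, e1, e2, e3, e4⟩ := quartic_zero lam
      (d*lam - d*lam^2 - c*lam + 2*c*lam^2 - c*lam^3 - b*lam + a*lam - a*lam^2)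
      (d*lam^2 + b + b*lam - a)
      (-d - d*lam + c - c*lam + c*lam^2 - b + a + a*lam) (d - c - c*lam - a) c (by
    intro z hz0 hz1 hzl
    have hz1' : z - 1 ≠ 0 := sub_ne_zero.mpr hz1
    have hzl' : z - lam ≠ 0 := sub_ne_zero.mpr hzl
    have hh := h z hz0 hz1 hzl
    field_simp at hh
    refine mul_left_cancel₀ hz1' ?_
    rw [mul_zero]
    linear_combination (z - 1) * hh)
  have hc : c = 0 := e4
  have hda : d = a := by linear_combination e3 + (1 + lam) * hc
  have hb : b = 0 := by
    linear_combination -e2 - hda - lam * hda + (1 - lam + lam^2) * hc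
  have ha : a = 0 := by
    have hx : a * (2 * (lam * (1 - lam))) = 0 := by
      linear_combination e0 + (lam - 2*lam^2 + lam^3) * hc + (lam^2 - lam) * hda + lam * hb
    rcases mul_eq_zero.mp hx with h' | h'
    · exact h'
    · rcases mul_eq_zero.mp h' with h2 | h2
      · norm_num at h2
      · rcases mul_eq_zero.mp h2 with h3 | h3
        · exact absurd h3 h0
        · exact absurd (by linear_combination -h3) h1
  have hd : d = 0 := hda.trans ha
  exact hdet (by rw [ha, hb, hc, hd]; ring)

theorem stmt_11 (lam : ℂ) (h0 : lam ≠ 0) (h1 : lam ≠ 1)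
    (D : Fin 3 → ℂ → ℂ)
    (hD0 : ∀ z, D 0 z = z + lam / z)
    (hD1 : ∀ z, D 1 z = z + (1 - lam) / (z - 1))
    (hD2 : ∀ z, D 2 z = z + (lam ^ 2 - lam) / (z - lam))
    (i j : Fin 3) (hij : i ≠ j) :
    ¬ ∃ a b c d : ℂ, a * d - b * c ≠ 0 ∧
      ∀ z : ℂ, z ≠ 0 → z ≠ 1 → z ≠ lam →
        (c * D i z + d) * D j z = a * D i z + b := by
  rintro ⟨a, b, c, d, hdet, h⟩
  have hdet' : d * a - (-b) * (-c) ≠ 0 := by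
    intro hx; exact hdet (by linear_combination hx)
  have hi : i = 0 ∨ i = 1 ∨ i = 2 := by omega
  have hj : j = 0 ∨ j = 1 ∨ j = 2 := by omega
  rcases hi with hi | hi | hi <;> rcases hj with hj | hj | hj <;>
      subst hi <;> subst hj <;>
      simp only [hD0, hD1, hD2] at h
  · exact hij rfl
  · exact pair01 lam a b c d h0 h1 hdet h
  · exact pair02 lam a b c d h0 h1 hdet h
  · refine pair01 lam d (-b) (-c) a h0 h1 hdet' ?_
    intro z hz0 hz1 hzl
    linear_combination -h z hz0 hz1 hzl
  · exact hij rfl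
  · exact pair12 lam a b c d h0 h1 hdet h
  · refine pair02 lam d (-b) (-c) a h0 h1 hdet' ?_
    intro z hz0 hz1 hzl
    linear_combination -h z hz0 hz1 hzl
  · refine pair12 lam d (-b) (-c) a h0 h1 hdet' ?_
    intro z hz0 hz1 hzl
    linear_combination -h z hz0 hz1 hzl
  · exact hij rfl
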